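/- Let b be a positive integer. There exists a real number A > 1, depending only on b, such that for every monic polynomial P of degree b with integer coefficients, if P has a root of modulus strictly greater than 1, then P has a root of modulus at least A. -/

import Mathlib

open Polynomial

private lemma choose_le_two_pow' (b i : ℕ) : b.choose i ≤ 2 ^ b := by
  rcases le_or_gt i b with h | h
  · calc b.choose i ≤ ∑ j ∈ Finset.range (b + 1), b.choose j :=
        Finset.single_le_sum (fun _ _ => Nat.zero_le _)
          (Finset.mem_range.2 (Nat.lt_succ_of_le h))
    _ = 2 ^ b := Nat.sum_range_choose b
  · simp [Nat.choose_eq_zero_of_lt h]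

set_option maxHeartbeats 1000000 in
/-- Coefficient bound for monic integer polynomials with all complex roots of modulus ≤ 2. -/
private lemma coeff_bound {b : ℕ} {P : Polynomial ℤ} (hP : P.Monic) (hdeg : P.natDegree = b)
    (hroots : ∀ z ∈ (P.map (algebraMap ℤ ℂ)).roots, ‖z‖ ≤ 2) (i : ℕ) :
    P.coeff i ∈ Set.Icc (-(4 ^ b : ℤ)) (4 ^ b) := by
  have h : ‖(P.map (algebraMap ℤ ℂ)).coeff i‖ ≤
      (2 : ℝ) ^ (P.natDegree - i) * P.natDegree.choose i :=
    Polynomial.coeff_le_of_roots_le i hP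
      (IsAlgClosed.splits _) (fun z hz => by
        exact hroots z hz)
  rw [Polynomial.coeff_map] at h
  have hcast : ‖(algebraMap ℤ ℂ) (P.coeff i)‖ = |(P.coeff i : ℝ)| := by
    simp [Complex.norm_intCast]
  rw [hcast, hdeg] at h
  have h2 : (2 : ℝ) ^ (b - i) * (b.choose i : ℝ) ≤ (4 : ℝ) ^ b := by
    have h1 : (2 : ℝ) ^ (b - i) ≤ 2 ^ b := by
      apply pow_le_pow_right₀ (by norm_num) (Nat.sub_le b i)
    have h2 : (b.choose i : ℝ) ≤ 2 ^ b := by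
      exact_mod_cast (choose_le_two_pow' b i).trans_eq (by push_cast; ring_nf)
    calc (2 : ℝ) ^ (b - i) * (b.choose i : ℝ) ≤ 2 ^ b * 2 ^ b := by
          apply mul_le_mul h1 h2 (by positivity) (by positivity)
      _ = 4 ^ b := by rw [← mul_pow]; norm_num
  have : |(P.coeff i : ℝ)| ≤ (4 : ℝ) ^ b := h.trans h2
  rw [abs_le] at this
  constructor
  · exact_mod_cast this.1
  · exact_mod_cast this.2

theorem monic_int_poly_root_modulus_gap (b : ℕ) (hb : 0 < b) :
    ∃ A : ℝ, 1 < A ∧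
      ∀ P : Polynomial ℤ, P.Monic → P.natDegree = b →
        (∃ z : ℂ, Polynomial.aeval z P = 0 ∧ 1 < ‖z‖) →
        ∃ z : ℂ, Polynomial.aeval z P = 0 ∧ A ≤ ‖z‖ := by
  classical
  -- the finite set of candidate polynomials
  set T : Set (Polynomial ℤ) :=
    {P | P.natDegree ≤ b ∧ ∀ i, P.coeff i ∈ Set.Icc (-(4 ^ b : ℤ)) (4 ^ b)} with hT
  have hTfin : T.Finite := by
    let π : Polynomial ℤ → Fin (b + 1) → ℤ := fun f i => f.coeff i
    refine ((Set.Finite.pi fun _ => Set.finite_Icc (-(4 ^ b : ℤ)) (4 ^ b)).subset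
      ?_).of_finite_image (?_ : Set.InjOn π _)
    · exact Set.image_subset_iff.2 fun f hf i _ => hf.2 i
    · refine fun x hx y hy hxy => (Polynomial.ext_iff_natDegree_le hx.1 hy.1).2 fun i hi => ?_
      exact congr_fun hxy ⟨i, Nat.lt_succ_of_le hi⟩
  -- the set of moduli of roots > 1 of polynomials in T
  set V : Set ℝ :=
    {x | 1 < x ∧ ∃ P ∈ T, ∃ z ∈ (P.map (algebraMap ℤ ℂ)).roots, ‖z‖ = x} with hV
  have hVfin : V.Finite := by
    have : V ⊆ ⋃ P ∈ T, (‖·‖) ''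
        ((P.map (algebraMap ℤ ℂ)).roots.toFinset : Set ℂ) := by
      rintro x ⟨-, P, hPT, z, hz, rfl⟩
      exact Set.mem_biUnion hPT ⟨z, by simpa using hz, rfl⟩
    exact (hTfin.biUnion fun P _ =>
      ((P.map (algebraMap ℤ ℂ)).roots.toFinset : Set ℂ).toFinite.image (‖·‖)).subset this
  set W : Set ℝ := insert 2 V with hW
  have hWfin : W.Finite := hVfin.insert 2
  have hWne : W.Nonempty := ⟨2, Set.mem_insert _ _⟩
  refine ⟨sInf W, ?_, ?_⟩
  · -- every element of W is > 1
    have hmem : sInf W ∈ W := hWne.csInf_mem hWfin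
    rcases hmem with h | h
    · rw [h]; norm_num
    · exact h.1
  · intro P hmonic hdeg ⟨z₀, hz₀, habs₀⟩
    have hQne : P.map (algebraMap ℤ ℂ) ≠ 0 := (hmonic.map _).ne_zero
    have hz₀r : z₀ ∈ (P.map (algebraMap ℤ ℂ)).roots := by
      rw [Polynomial.mem_roots hQne, Polynomial.IsRoot, Polynomial.eval_map,
        ← Polynomial.aeval_def]
      exact hz₀
    -- pick root of maximal modulus
    obtain ⟨z, hzmem, hzmax⟩ := (P.map (algebraMap ℤ ℂ)).roots.toFinset.exists_max_image
      (‖·‖) ⟨z₀, Multiset.mem_toFinset.2 hz₀r⟩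
    have hzr : z ∈ (P.map (algebraMap ℤ ℂ)).roots := Multiset.mem_toFinset.1 hzmem
    have hzroot : Polynomial.aeval z P = 0 := by
      have := (Polynomial.mem_roots hQne).1 hzr
      rwa [Polynomial.IsRoot, Polynomial.eval_map, ← Polynomial.aeval_def] at this
    have h1z : 1 < ‖z‖ :=
      lt_of_lt_of_le habs₀ (hzmax z₀ (Multiset.mem_toFinset.2 hz₀r))
    refine ⟨z, hzroot, ?_⟩
    rcases le_or_gt (‖z‖) 2 with h2 | h2
    · -- all roots have modulus ≤ 2, so P ∈ T and abs z ∈ V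
      have hroots : ∀ w ∈ (P.map (algebraMap ℤ ℂ)).roots, ‖w‖ ≤ 2 :=
        fun w hw => (hzmax w (Multiset.mem_toFinset.2 hw)).trans h2
      have hPT : P ∈ T := ⟨hdeg.le, coeff_bound hmonic hdeg hroots⟩
      have hxV : ‖z‖ ∈ V := ⟨h1z, P, hPT, z, hzr, rfl⟩
      exact csInf_le hWfin.bddBelow (Set.mem_insert_of_mem _ hxV)
    · exact (csInf_le hWfin.bddBelow (Set.mem_insert _ _)).trans h2.le
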